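/- For n ≥ 3, the brushing number of the complete graph K_n equals floor(n^2/4). -/
import Mathlib


open scoped BigOperators

namespace Paper

variable {V : Type*}

/-- The zero-forcing closure: vertices that eventually become black starting from `S`. -/
inductive ZFClosure (G : SimpleGraph V) (S : Set V) : V → Prop
  | init {v : V} : v ∈ S → ZFClosure G S v
  | force {v w : V} : ZFClosure G S v → G.Adj v w →
      (∀ u, G.Adj v u → u ≠ w → ZFClosure G S u) → ZFClosure G S w

/-- `S` is a zero-forcing set of `G`. -/
def IsZeroForcingSet (G : SimpleGraph V) (S : Set V) : Prop :=
  ∀ v : V, ZFClosure G S v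

/-- The zero-forcing number `Z(G)`. -/
noncomputable def zfNumber (G : SimpleGraph V) : ℕ :=
  sInf {n | ∃ S : Set V, IsZeroForcingSet G S ∧ S.ncard = n}

/-- A state of the brushing process: the set of vertices that have fired (and hence
are clean), the set of dirty edges, and the number of brushes at each vertex. -/
structure BrushConfig (V : Type*) where
  fired : Set V
  dirty : Set (Sym2 V)
  brushes : V → ℕ

open Classical in
def BrushStep (G : SimpleGraph V) (restricted : Bool) (c c' : BrushConfig V) : Prop :=
  ∃ (v : V) (f : Sym2 V → ℕ),
    v ∉ c.fired ∧
    (∀ e ∈ c.dirty, v ∈ e → if restricted then f e = 1 else 1 ≤ f e) ∧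
    (∑ᶠ e ∈ {e ∈ c.dirty | v ∈ e}, f e) ≤ c.brushes v ∧
    c'.fired = insert v c.fired ∧
    c'.dirty = {e ∈ c.dirty | v ∉ e} ∧
    ∀ w : V, c'.brushes w =
      (if w = v then 0 else c.brushes w) + c.dirty.indicator f s(v, w)

/-- The initial brush configuration `ω` cleans the graph `G`:  starting with every vertex
and every edge dirty, some sequence of firings results in every vertex having fired. -/
def Cleans (G : SimpleGraph V) (restricted : Bool) (ω : V → ℕ) : Prop :=
  ∃ c : BrushConfig V,
    Relation.ReflTransGen (BrushStep G restricted) ⟨∅, G.edgeSet, ω⟩ c ∧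
    c.fired = Set.univ

/-- The brushing number `B(G)` (several brushes may traverse a single edge). -/
noncomputable def brushNumber (G : SimpleGraph V) : ℕ :=
  sInf {n | ∃ ω : V → ℕ, Cleans G false ω ∧ ∑ᶠ v, ω v = n}

/-- The restricted brushing number `b(G)` (each edge is traversed by exactly one brush). -/
noncomputable def brushNumber' (G : SimpleGraph V) : ℕ :=
  sInf {n | ∃ ω : V → ℕ, Cleans G true ω ∧ ∑ᶠ v, ω v = n}



open Classical

structure KInv (n : ℕ) (ω : Fin n → ℕ) (c : BrushConfig (Fin n)) : Prop where
  dirty_eq : c.dirty = {e | e ∈ (⊤ : SimpleGraph (Fin n)).edgeSet ∧ ∀ v ∈ c.fired, v ∉ e}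
  fired_zero : ∀ v ∈ c.fired, c.brushes v = 0
  lower : ∀ w, w ∉ c.fired → ω w + c.fired.ncard ≤ c.brushes w
  total : ∑ v, c.brushes v ≤ ∑ v, ω v

lemma sum_indicator_le {n : ℕ} (c : BrushConfig (Fin n)) (v : Fin n) (f : Sym2 (Fin n) → ℕ)
    (hsub : c.dirty ⊆ (⊤ : SimpleGraph (Fin n)).edgeSet)
    (hle : (∑ᶠ e ∈ {e ∈ c.dirty | v ∈ e}, f e) ≤ c.brushes v) :
    ∑ w : Fin n, c.dirty.indicator f s(v, w) ≤ c.brushes v := by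
  classical
  set D : Set (Sym2 (Fin n)) := {e ∈ c.dirty | v ∈ e} with hDdef
  have hD : D.Finite := Set.toFinite _
  rw [finsum_mem_eq_finite_toFinset_sum _ hD] at hle
  set W : Finset (Fin n) := Finset.univ.filter (fun w => s(v, w) ∈ c.dirty) with hW
  have hne : ∀ w ∈ W, w ≠ v := by
    intro w hw hwv
    subst hwv
    have := hsub (by simpa [hW] using hw)
    simp [SimpleGraph.edgeSet_top] at this
  have h1 : ∑ w : Fin n, c.dirty.indicator f s(v, w) = ∑ w ∈ W, f s(v, w) := by
    rw [hW, Finset.sum_filter]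
    refine Finset.sum_congr rfl fun w _ => ?_
    by_cases h : s(v, w) ∈ c.dirty <;> simp [Set.indicator_apply, h]
  have hinj : ∀ a ∈ W, ∀ b ∈ W, s(v, a) = s(v, b) → a = b := by
    intro a ha b hb hab
    rcases Sym2.eq_iff.1 hab with ⟨_, h⟩ | ⟨h1', h2'⟩
    · exact h
    · exact absurd h2' (hne a ha)
  have h2 : ∑ w ∈ W, f s(v, w) = ∑ e ∈ W.image (fun w => s(v, w)), f e :=
    (Finset.sum_image hinj).symm
  have h3 : W.image (fun w => s(v, w)) = hD.toFinset := by
    ext e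
    simp only [Finset.mem_image, Set.Finite.mem_toFinset, hDdef, hW, Finset.mem_filter,
      Finset.mem_univ, true_and, Set.mem_setOf_eq]
    constructor
    · rintro ⟨w, hw, rfl⟩
      exact ⟨hw, Sym2.mem_mk_left v w⟩
    · rintro ⟨he, hv⟩
      exact ⟨Sym2.Mem.other hv, by rw [Sym2.other_spec hv]; exact he, Sym2.other_spec hv⟩
  rw [h1, h2, h3]
  exact hle

lemma KInv.step {n : ℕ} {ω : Fin n → ℕ} {c c' : BrushConfig (Fin n)}
    (h : KInv n ω c) (hs : BrushStep (⊤ : SimpleGraph (Fin n)) false c c') :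
    KInv n ω c' ∧ c'.fired.ncard = c.fired.ncard + 1 := by
  classical
  obtain ⟨v, f, hv, hf1, hfsum, hfired, hdirty, hbr⟩ := hs
  have hsub : c.dirty ⊆ (⊤ : SimpleGraph (Fin n)).edgeSet := by
    rw [h.dirty_eq]; intro e he; exact he.1
  have hmem : ∀ w : Fin n, s(v, w) ∈ c.dirty ↔ (w ≠ v ∧ v ∉ c.fired ∧ w ∉ c.fired) := by
    intro w
    rw [h.dirty_eq]
    simp only [Set.mem_setOf_eq, SimpleGraph.edgeSet_top, Sym2.isDiag_iff_proj_eq, Sym2.mem_iff]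
    constructor
    · rintro ⟨hd, hall⟩
      exact ⟨fun hh => hd hh.symm, fun hvf => (hall v hvf) (Or.inl rfl),
        fun hwf => (hall w hwf) (Or.inr rfl)⟩
    · rintro ⟨hwv, hvf, hwf⟩
      refine ⟨fun hh => hwv hh.symm, ?_⟩
      rintro u hu (rfl | rfl)
      · exact hvf hu
      · exact hwf hu
  have hcard : c'.fired.ncard = c.fired.ncard + 1 := by
    rw [hfired]; exact Set.ncard_insert_of_notMem hv (Set.toFinite _)
  refine ⟨⟨?_, ?_, ?_, ?_⟩, hcard⟩
  · rw [hdirty, hfired, h.dirty_eq]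
    ext e
    simp only [Set.mem_setOf_eq, Set.forall_mem_insert]
    tauto
  · intro u hu
    rw [hfired, Set.mem_insert_iff] at hu
    rcases hu with rfl | hu
    · have : s(u, u) ∉ c.dirty := by
        intro hh
        have := hsub hh
        simp [SimpleGraph.edgeSet_top] at this
      rw [hbr u]
      simp [Set.indicator_apply, this]
    · have huv : u ≠ v := fun hh => hv (hh ▸ hu)
      have : s(v, u) ∉ c.dirty := by
        rw [hmem u]; tauto
      rw [hbr u]
      simp [Set.indicator_apply, this, huv, h.fired_zero u hu]
  · intro w hw
    rw [hfired, Set.mem_insert_iff] at hw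
    push_neg at hw
    obtain ⟨hwv, hwf⟩ := hw
    have hd : s(v, w) ∈ c.dirty := (hmem w).2 ⟨hwv, hv, hwf⟩
    have hf : 1 ≤ f s(v, w) := by
      have := hf1 s(v, w) hd (Sym2.mem_mk_left v w)
      simpa using this
    have := h.lower w hwf
    rw [hbr w, if_neg hwv, Set.indicator_of_mem hd, hcard]
    omega
  · have hz : c'.brushes v = 0 := by
      have hnd : s(v, v) ∉ c.dirty := by
        intro hh
        have := hsub hh
        simp [SimpleGraph.edgeSet_top] at this
      rw [hbr v]
      simp [Set.indicator_apply, hnd]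
    have e1 : ∀ w ∈ Finset.univ.erase v,
        c'.brushes w = c.brushes w + c.dirty.indicator f s(v, w) := by
      intro w hw
      rw [hbr w, if_neg (Finset.ne_of_mem_erase hw)]
    calc ∑ w, c'.brushes w
        = c'.brushes v + ∑ w ∈ Finset.univ.erase v, c'.brushes w :=
          (Finset.add_sum_erase _ _ (Finset.mem_univ v)).symm
      _ = ∑ w ∈ Finset.univ.erase v, (c.brushes w + c.dirty.indicator f s(v, w)) := by
          rw [hz, zero_add]
          exact Finset.sum_congr rfl e1
      _ = (∑ w ∈ Finset.univ.erase v, c.brushes w)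
            + ∑ w ∈ Finset.univ.erase v, c.dirty.indicator f s(v, w) :=
          Finset.sum_add_distrib
      _ ≤ (∑ w ∈ Finset.univ.erase v, c.brushes w) + c.brushes v := by
          gcongr
          calc ∑ w ∈ Finset.univ.erase v, c.dirty.indicator f s(v, w)
              ≤ ∑ w, c.dirty.indicator f s(v, w) :=
                Finset.sum_le_sum_of_subset (Finset.erase_subset _ _)
            _ ≤ c.brushes v := sum_indicator_le c v f hsub hfsum
      _ = ∑ w, c.brushes w := by
          rw [add_comm]
          exact Finset.add_sum_erase _ _ (Finset.mem_univ v)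
      _ ≤ ∑ v, ω v := h.total

lemma kinv_init {n : ℕ} (ω : Fin n → ℕ) :
    KInv n ω ⟨∅, (⊤ : SimpleGraph (Fin n)).edgeSet, ω⟩ := by
  refine ⟨?_, ?_, ?_, le_refl _⟩
  · ext e; simp
  · intro v hv; simp at hv
  · intro w _; simp

lemma kinv_of_reach {n : ℕ} {ω : Fin n → ℕ} {c : BrushConfig (Fin n)}
    (h : Relation.ReflTransGen (BrushStep (⊤ : SimpleGraph (Fin n)) false)
      ⟨∅, (⊤ : SimpleGraph (Fin n)).edgeSet, ω⟩ c) : KInv n ω c := by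
  induction h with
  | refl => exact kinv_init ω
  | tail _ hstep ih => exact (ih.step hstep).1

lemma count_of_fired {n : ℕ} {ω : Fin n → ℕ} {c : BrushConfig (Fin n)} (h : KInv n ω c)
    {m : ℕ} (hm : c.fired.ncard = m) (hmn : m ≤ n) : (n - m) * m ≤ ∑ v, ω v := by
  classical
  set t : Finset (Fin n) := Finset.univ.filter (fun w => w ∉ c.fired) with ht
  have hcard : t.card = n - m := by
    have h1 : (Finset.univ.filter (fun w => w ∈ c.fired)).card = m := by
      rw [← hm, Set.ncard_eq_toFinset_card']
      congr 1
      ext w; simp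
    rw [ht, Finset.filter_not, Finset.card_sdiff_of_subset (Finset.filter_subset _ _),
      Finset.card_univ, Fintype.card_fin, h1]
  calc (n - m) * m = ∑ _w ∈ t, m := by rw [Finset.sum_const, hcard, smul_eq_mul]
    _ ≤ ∑ w ∈ t, c.brushes w := by
        refine Finset.sum_le_sum fun w hw => ?_
        have hwf : w ∉ c.fired := by simpa [ht] using hw
        have := h.lower w hwf
        omega
    _ ≤ ∑ w, c.brushes w := Finset.sum_le_sum_of_subset (Finset.subset_univ t)
    _ ≤ ∑ v, ω v := h.total

lemma half_mul (n : ℕ) : (n - n / 2) * (n / 2) = n ^ 2 / 4 := by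
  rcases Nat.even_or_odd' n with ⟨k, hk | hk⟩ <;> subst hk
  · have h1 : 2 * k / 2 = k := by omega
    have h2 : 2 * k - k = k := by omega
    have h3 : (2 * k) ^ 2 = 4 * (k * k) := by ring
    rw [h1, h2, h3]
    omega
  · have h1 : (2 * k + 1) / 2 = k := by omega
    have h2 : 2 * k + 1 - k = k + 1 := by omega
    have h3 : (2 * k + 1) ^ 2 = 4 * (k * k + k) + 1 := by ring
    rw [h1, h2, h3]
    have : (k + 1) * k = k * k + k := by ring
    omega

lemma brush_lower {n : ℕ} (hn : 3 ≤ n) (ω : Fin n → ℕ)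
    (h : Cleans (⊤ : SimpleGraph (Fin n)) false ω) : n ^ 2 / 4 ≤ ∑ᶠ v, ω v := by
  obtain ⟨c, hr, hfin⟩ := h
  have key : ∀ c : BrushConfig (Fin n),
      Relation.ReflTransGen (BrushStep (⊤ : SimpleGraph (Fin n)) false)
        ⟨∅, (⊤ : SimpleGraph (Fin n)).edgeSet, ω⟩ c →
      n / 2 ≤ c.fired.ncard → (n - n / 2) * (n / 2) ≤ ∑ v, ω v := by
    intro c hc
    induction hc with
    | refl =>
      intro hle
      simp only [Set.ncard_empty] at hle
      omega
    | @tail b c' hb hstep ih =>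
      intro hle
      by_cases hcase : n / 2 ≤ b.fired.ncard
      · exact ih hcase
      · have hinv := kinv_of_reach hb
        obtain ⟨hinv', hcard⟩ := hinv.step hstep
        have : c'.fired.ncard = n / 2 := by omega
        exact count_of_fired hinv' this (by omega)
  have hfincard : c.fired.ncard = n := by
    rw [hfin, Set.ncard_univ, Nat.card_eq_fintype_card, Fintype.card_fin]
  have := key c hr (by omega)
  rw [finsum_eq_sum_of_fintype, ← half_mul n]
  exact this

def ubOmega (n : ℕ) : Fin n → ℕ := fun i => n - 1 - 2 * i.val

def ubConf (n k : ℕ) : BrushConfig (Fin n) where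
  fired := {v | v.val < k}
  dirty := {e | e ∈ (⊤ : SimpleGraph (Fin n)).edgeSet ∧ ∀ v ∈ e, k ≤ v.val}
  brushes := fun w => if w.val < k then 0 else (n - 1 - 2 * w.val) + k

lemma ubConf_dirty_mem {n k : ℕ} (a b : Fin n) :
    s(a, b) ∈ (ubConf n k).dirty ↔ a ≠ b ∧ k ≤ a.val ∧ k ≤ b.val := by
  simp only [ubConf, Set.mem_setOf_eq, SimpleGraph.edgeSet_top, Sym2.mk_isDiag_iff,
    Sym2.mem_iff]
  constructor
  · rintro ⟨hd, hall⟩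
    exact ⟨hd, hall a (Or.inl rfl), hall b (Or.inr rfl)⟩
  · rintro ⟨hab, ha, hb⟩
    refine ⟨hab, ?_⟩
    rintro u (rfl | rfl)
    · exact ha
    · exact hb

lemma ubStep {n k : ℕ} (hk : k < n) :
    BrushStep (⊤ : SimpleGraph (Fin n)) false (ubConf n k) (ubConf n (k + 1)) := by
  classical
  refine ⟨⟨k, hk⟩, fun _ => 1, ?_, ?_, ?_, ?_, ?_, ?_⟩
  · simp [ubConf]
  · intro e _ _
    simp
  · set v : Fin n := ⟨k, hk⟩ with hv
    set D : Set (Sym2 (Fin n)) := {e ∈ (ubConf n k).dirty | v ∈ e} with hD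
    have hDeq : D = (fun w : Fin n => s(v, w)) '' {w : Fin n | k < w.val} := by
      ext e
      constructor
      · rintro ⟨hd, hve⟩
        refine ⟨Sym2.Mem.other hve, ?_, Sym2.other_spec hve⟩
        have he : s(v, Sym2.Mem.other hve) = e := Sym2.other_spec hve
        rw [← he, ubConf_dirty_mem] at hd
        obtain ⟨hne, _, hb⟩ := hd
        have : (Sym2.Mem.other hve).val ≠ k := by
          intro hh
          exact hne (Fin.ext hh.symm)
        simp only [Set.mem_setOf_eq]
        omega
      · rintro ⟨w, hw, rfl⟩
        simp only [Set.mem_setOf_eq] at hw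
        refine ⟨?_, Sym2.mem_mk_left _ _⟩
        rw [ubConf_dirty_mem]
        refine ⟨?_, by simp [hv], by omega⟩
        intro hh
        have := congrArg Fin.val hh
        simp [hv] at this
        omega
    have hfin : D.Finite := Set.toFinite _
    have hcard : D.ncard = n - 1 - k := by
      rw [hDeq, Set.ncard_image_of_injOn]
      · have hset : {w : Fin n | k < w.val} = ↑(Finset.Ioi v) := by
          ext w
          simp [Fin.lt_def, hv]
        rw [hset, Set.ncard_coe_finset, Fin.card_Ioi]
      · intro a ha b hb hab
        rcases Sym2.eq_iff.1 hab with ⟨_, h⟩ | ⟨h1, h2⟩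
        · exact h
        · exfalso
          simp only [Set.mem_setOf_eq] at ha
          have := congrArg Fin.val h2
          simp [hv] at this
          omega
    have hsum : (∑ᶠ e ∈ D, (fun _ => (1 : ℕ)) e) = n - 1 - k := by
      rw [finsum_mem_eq_finite_toFinset_sum _ hfin]
      simp only [Finset.sum_const, smul_eq_mul, mul_one]
      rw [← Set.ncard_eq_toFinset_card _ hfin, hcard]
    rw [hsum]
    have hbv : (ubConf n k).brushes v = n - 1 - 2 * k + k := by
      simp [ubConf, hv]
    rw [hbv]
    omega
  · ext w
    simp only [ubConf, Set.mem_setOf_eq, Set.mem_insert_iff, Fin.ext_iff]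
    omega
  · ext e
    induction e using Sym2.ind with
    | _ a b =>
      simp only [Set.mem_setOf_eq, ubConf_dirty_mem, Sym2.mem_iff, not_or, ne_eq,
        Fin.ext_iff]
      omega
  · intro w
    set v : Fin n := ⟨k, hk⟩ with hv
    by_cases hw : k < w.val
    · have hmem : s(v, w) ∈ (ubConf n k).dirty := by
        rw [ubConf_dirty_mem]
        refine ⟨?_, by simp [hv], by omega⟩
        intro hh
        have := congrArg Fin.val hh
        simp [hv] at this
        omega
      have hwv : w ≠ v := by
        intro hh
        have := congrArg Fin.val hh
        simp [hv] at this
        omega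
      rw [Set.indicator_of_mem hmem, if_neg hwv]
      simp only [ubConf]
      rw [if_neg (by omega), if_neg (by omega)]
      simp [mul_comm]
      omega
    · by_cases hwk : w.val = k
      · have hwv : w = v := Fin.ext (by simp [hv, hwk])
        have hnd : s(v, v) ∉ (ubConf n k).dirty := by
          rw [ubConf_dirty_mem]
          simp
        subst hwv
        rw [Set.indicator_of_notMem hnd, if_pos rfl]
        simp only [ubConf]
        rw [if_pos (by omega)]
        simp
      · have hlt : w.val < k := by omega
        have hwv : w ≠ v := by
          intro hh
          have := congrArg Fin.val hh
          simp [hv] at this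
          omega
        have hnd : s(v, w) ∉ (ubConf n k).dirty := by
          rw [ubConf_dirty_mem]
          push_neg
          intro _ _
          omega
        rw [Set.indicator_of_notMem hnd, if_neg hwv]
        simp only [ubConf]
        rw [if_pos (by omega), if_pos (by omega)]
        simp

lemma ubReach {n : ℕ} (k : ℕ) (hk : k ≤ n) :
    Relation.ReflTransGen (BrushStep (⊤ : SimpleGraph (Fin n)) false)
      (ubConf n 0) (ubConf n k) := by
  induction k with
  | zero => exact .refl
  | succ k ih => exact .tail (ih (by omega)) (ubStep (by omega))

lemma ubConf_zero {n : ℕ} :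
    ubConf n 0 = ⟨∅, (⊤ : SimpleGraph (Fin n)).edgeSet, ubOmega n⟩ := by
  unfold ubConf ubOmega
  congr 1
  all_goals first
  | (ext x; simp)
  | (funext w; simp)

lemma ubCleans (n : ℕ) : Cleans (⊤ : SimpleGraph (Fin n)) false (ubOmega n) := by
  refine ⟨ubConf n n, ?_, ?_⟩
  · rw [← ubConf_zero]
    exact ubReach n le_rfl
  · ext v
    simp [ubConf, v.isLt]

lemma sum_range_formula : ∀ n : ℕ, ∑ i ∈ Finset.range n, (n - 1 - 2 * i) = n ^ 2 / 4
  | 0 => by simp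
  | 1 => by simp
  | (n + 2) => by
    rw [Finset.sum_range_succ']
    have h1 : ∀ i, (n + 2 - 1 - 2 * (i + 1)) = n - 1 - 2 * i := fun i => by omega
    simp only [h1]
    rw [Finset.sum_range_succ]
    have h2 : n - 1 - 2 * n = 0 := by omega
    rw [h2, add_zero, sum_range_formula n]
    have h3 : (n + 2) ^ 2 = n ^ 2 + 4 * n + 4 := by ring
    omega

lemma ubSum (n : ℕ) : ∑ᶠ v, ubOmega n v = n ^ 2 / 4 := by
  rw [finsum_eq_sum_of_fintype]
  unfold ubOmega
  exact (Fin.sum_univ_eq_sum_range (fun i => n - 1 - 2 * i) n).trans (sum_range_formula n)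

theorem brushNumber_completeGraph (n : ℕ) (hn : 3 ≤ n) :
    brushNumber (⊤ : SimpleGraph (Fin n)) = n ^ 2 / 4 := by
  apply le_antisymm
  · exact Nat.sInf_le ⟨ubOmega n, ubCleans n, ubSum n⟩
  · refine le_csInf ⟨n ^ 2 / 4, ⟨ubOmega n, ubCleans n, ubSum n⟩⟩ ?_
    rintro b ⟨ω, hc, rfl⟩
    exact brush_lower hn ω hc

end Paper
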